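/- Let b, d : ℕ → (0,∞) and suppose there exist c > 0 and γ < 1 such that (1 + d(i))/(b(i) + d(i)) ≥ c·i^{-γ} for all i ≥ 1. Then for every λ > 0 the series ∑_{k=0}^∞ ∏_{i=0}^{k} b(i)/(λ + b(i) + d(i)) converges. -/

import Mathlib

open Real Finset

set_option maxHeartbeats 1600000 in
theorem stmt_17 (b d : ℕ → ℝ) (hb : ∀ i, 0 < b i) (hd : ∀ i, 0 < d i)
    (c γ : ℝ) (hc : 0 < c) (hγ : γ < 1)
    (hbd : ∀ i : ℕ, 1 ≤ i → c * (i : ℝ) ^ (-γ) ≤ (1 + d i) / (b i + d i)) :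
    ∀ lam : ℝ, 0 < lam →
      Summable (fun k : ℕ => ∏ i ∈ Finset.range (k + 1), b i / (lam + b i + d i)) := by
  intro lam hlam
  set μ := max γ 0 with hμdef
  have hμ0 : 0 ≤ μ := le_max_right _ _
  have hμ1 : μ < 1 := max_lt hγ one_pos
  have hlam1 : (0:ℝ) < lam + 1 := by linarith
  set κ := min lam 1 / (lam + 1) with hκdef
  have hκpos : 0 < κ := div_pos (lt_min hlam one_pos) hlam1
  set c₁ := κ * min c 1 with hc₁def
  have hc₁ : 0 < c₁ := mul_pos hκpos (lt_min hc one_pos)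
  have hden : ∀ i, 0 < lam + b i + d i := fun i => by
    have := hb i; have := hd i; linarith
  have hfacpos : ∀ i, 0 < b i / (lam + b i + d i) := fun i =>
    div_pos (hb i) (hden i)
  have hfacle1 : ∀ i, b i / (lam + b i + d i) ≤ 1 := fun i => by
    rw [div_le_one (hden i)]; have := hd i; linarith
  -- pointwise lower bound on x_i
  have hx : ∀ i : ℕ, 1 ≤ i →
      c₁ * (i:ℝ) ^ (-μ) ≤ (lam + d i) / (lam + b i + d i) := by
    intro i hi
    have hi1 : (1:ℝ) ≤ (i:ℝ) := by exact_mod_cast hi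
    have hipos : (0:ℝ) < (i:ℝ) := by linarith
    have hiμ : (i:ℝ) ^ (-μ) ≤ 1 :=
      Real.rpow_le_one_of_one_le_of_nonpos hi1 (neg_nonpos.mpr hμ0)
    have hiμpos : 0 < (i:ℝ) ^ (-μ) := Real.rpow_pos_of_pos hipos _
    have hBD : 0 < b i + d i := by have := hb i; have := hd i; linarith
    set t := (1 + d i) / (b i + d i) with htdef
    have ht1 : c * (i:ℝ) ^ (-μ) ≤ t := by
      refine le_trans ?_ (hbd i hi)
      have : (i:ℝ) ^ (-μ) ≤ (i:ℝ) ^ (-γ) :=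
        Real.rpow_le_rpow_of_exponent_le hi1 (neg_le_neg (le_max_left γ 0))
      nlinarith
    have hmin : min c 1 * (i:ℝ) ^ (-μ) ≤ min t 1 := by
      refine le_min ?_ ?_
      · nlinarith [min_le_left c 1, min_le_right c 1]
      · nlinarith [min_le_right c 1, min_le_left c 1]
    -- main: κ * min t 1 ≤ x
    have hmain : κ * min t 1 ≤ (lam + d i) / (lam + b i + d i) := by
      have hmpos : 0 < min lam 1 := lt_min hlam one_pos
      rcases le_total (b i) 1 with hB | hB
      · -- b i ≤ 1 : x ≥ lam/(lam+1) ≥ κ ≥ κ * min t 1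
        have h1 : κ * min t 1 ≤ κ := by
          have := mul_le_mul_of_nonneg_left (min_le_right t 1) hκpos.le
          linarith
        refine h1.trans ?_
        rw [hκdef, div_le_div_iff₀ hlam1 (hden i)]
        have e1 : min lam 1 * lam ≤ lam * lam :=
          mul_le_mul_of_nonneg_right (min_le_left lam 1) hlam.le
        have e2 : min lam 1 * b i ≤ min lam 1 * 1 :=
          mul_le_mul_of_nonneg_left hB hmpos.le
        have e3 : min lam 1 * d i ≤ 1 * d i :=
          mul_le_mul_of_nonneg_right (min_le_right lam 1) (hd i).le
        have := min_le_left lam 1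
        have := hd i
        nlinarith
      · -- 1 ≤ b i : x ≥ κ * t ≥ κ * min t 1
        have h1 : κ * min t 1 ≤ κ * t :=
          mul_le_mul_of_nonneg_left (min_le_left t 1) hκpos.le
        refine h1.trans ?_
        have hrw : κ * t = (min lam 1 * (1 + d i)) / ((lam + 1) * (b i + d i)) := by
          rw [hκdef, htdef]; field_simp
        rw [hrw, div_le_div_iff₀ (by positivity) (hden i)]
        have e1 : min lam 1 * (1 + d i) ≤ lam + d i := by
          have := mul_le_mul_of_nonneg_right (min_le_right lam 1) (hd i).le
          have := min_le_left lam 1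
          nlinarith
        have e2 : lam + b i + d i ≤ (lam + 1) * (b i + d i) := by
          nlinarith [mul_nonneg hlam.le (show (0:ℝ) ≤ b i + d i - 1 by
            have := hd i; linarith)]
        exact mul_le_mul e1 e2 (hden i).le (by have := hd i; linarith)
    calc c₁ * (i:ℝ) ^ (-μ) = κ * (min c 1 * (i:ℝ) ^ (-μ)) := by ring
      _ ≤ κ * min t 1 := mul_le_mul_of_nonneg_left hmin hκpos.le
      _ ≤ _ := hmain
  -- factor bound
  have hfac : ∀ i : ℕ, 1 ≤ i →
      b i / (lam + b i + d i) ≤ Real.exp (-(c₁ * (i:ℝ) ^ (-μ))) := by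
    intro i hi
    have hsplit : b i / (lam + b i + d i)
        = 1 - (lam + d i) / (lam + b i + d i) := by
      rw [eq_sub_iff_add_eq, ← add_div, div_eq_one_iff_eq (hden i).ne']
      ring
    rw [hsplit]
    have h1 : 1 - (lam + d i) / (lam + b i + d i) ≤ 1 - c₁ * (i:ℝ) ^ (-μ) := by
      linarith [hx i hi]
    refine h1.trans ?_
    have := Real.add_one_le_exp (-(c₁ * (i:ℝ) ^ (-μ)))
    linarith
  -- product bound
  have hkey : ∀ k : ℕ, (∏ i ∈ Finset.range (k + 1), b i / (lam + b i + d i))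
      ≤ Real.exp (-(c₁ * (k:ℝ) ^ (-μ))) ^ k := by
    intro k
    rw [Finset.prod_range_succ']
    have h0 : b 0 / (lam + b 0 + d 0) ≤ 1 := hfacle1 0
    have hprod : (∏ i ∈ Finset.range k, b (i+1) / (lam + b (i+1) + d (i+1)))
        ≤ Real.exp (-(c₁ * (k:ℝ) ^ (-μ))) ^ k := by
      have h := Finset.prod_le_prod (s := Finset.range k)
          (f := fun i => b (i+1) / (lam + b (i+1) + d (i+1)))
          (g := fun _ => Real.exp (-(c₁ * (k:ℝ) ^ (-μ))))
          (fun i _ => (hfacpos _).le) ?_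
      · simpa using h
      intro i hik
      rw [Finset.mem_range] at hik
      refine (hfac (i+1) (Nat.le_add_left 1 i)).trans ?_
      rw [Real.exp_le_exp]
      have hle : ((i:ℝ)+1) ≤ (k:ℝ) := by exact_mod_cast hik
      have hrp : (k:ℝ) ^ (-μ) ≤ ((i+1:ℕ):ℝ) ^ (-μ) := by
        push_cast
        exact Real.rpow_le_rpow_of_nonpos (by positivity) hle (neg_nonpos.mpr hμ0)
      push_cast at hrp ⊢
      nlinarith
    calc (∏ i ∈ Finset.range k, b (i+1) / (lam + b (i+1) + d (i+1)))
          * (b 0 / (lam + b 0 + d 0))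
        ≤ (∏ i ∈ Finset.range k, b (i+1) / (lam + b (i+1) + d (i+1))) * 1 := by
          exact mul_le_mul_of_nonneg_left h0
            (Finset.prod_nonneg fun i _ => (hfacpos _).le)
      _ = _ := by rw [mul_one]
      _ ≤ _ := hprod
  -- choose n with 2 ≤ n * (1 - μ)
  clear_value κ c₁ μ
  have hp : (0:ℝ) < 1 - μ := by linarith
  obtain ⟨n, hn1, hn2⟩ : ∃ n : ℕ, 1 ≤ n ∧ 2 ≤ (n:ℝ) * (1 - μ) := by
    refine ⟨max ⌈2/(1-μ)⌉₊ 1, le_max_right _ _, ?_⟩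
    have h1 : 2/(1-μ) ≤ (⌈2/(1-μ)⌉₊:ℝ) := Nat.le_ceil _
    have h2 : ((⌈2/(1-μ)⌉₊:ℕ):ℝ) ≤ ((max ⌈2/(1-μ)⌉₊ 1 : ℕ):ℝ) := by
      exact_mod_cast le_max_left _ 1
    have := (div_le_iff₀ hp).mp (h1.trans h2)
    linarith
  have hnpos : (0:ℝ) < (n:ℝ) := by exact_mod_cast hn1
  obtain ⟨C, hC1, hC4⟩ : ∃ C : ℝ, 1 ≤ C ∧ ((n:ℝ)/c₁)^n * 4 ≤ C :=
    ⟨max (((n:ℝ)/c₁)^n * 4) 1, le_max_right _ _, le_max_left _ _⟩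
  -- final bound and summability
  have hbound : ∀ k : ℕ, (∏ i ∈ Finset.range (k + 1), b i / (lam + b i + d i))
      ≤ C / ((k:ℝ) + 1)^2 := by
    intro k
    rcases Nat.eq_zero_or_pos k with rfl | hk
    · have e0 : ∏ i ∈ Finset.range (0+1), b i / (lam + b i + d i)
          = b 0 / (lam + b 0 + d 0) :=
        Finset.prod_range_one (f := fun i => b i / (lam + b i + d i))
      have e1 : C / (((0:ℕ):ℝ) + 1)^2 = C := by norm_num
      rw [e0, e1]
      exact (hfacle1 0).trans hC1
    · have hk1 : (1:ℝ) ≤ (k:ℝ) := by exact_mod_cast hk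
      have hkpos : (0:ℝ) < (k:ℝ) := by linarith
      set y := (k:ℝ) * (c₁ * (k:ℝ) ^ (-μ)) with hydef
      have hyeq : y = c₁ * (k:ℝ) ^ (1 - μ) := by
        rw [hydef, show (1:ℝ) - μ = 1 + -μ by ring, Real.rpow_add hkpos, Real.rpow_one]
        ring
      have hypos : 0 < y := by
        rw [hyeq]
        have := Real.rpow_pos_of_pos hkpos (1 - μ)
        nlinarith
      have hexp : Real.exp (-(c₁ * (k:ℝ) ^ (-μ))) ^ k = Real.exp (-y) := by
        rw [← Real.exp_nat_mul]; congr 1; rw [hydef]; ring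
      have hyle : (y / n)^n ≤ Real.exp y := by
        have h1 : Real.exp y = Real.exp (y/n) ^ n := by
          rw [← Real.exp_nat_mul, mul_div_cancel₀ _ hnpos.ne']
        rw [h1]
        exact pow_le_pow_left₀ (by positivity)
          (by linarith [Real.add_one_le_exp (y/(n:ℝ))]) n
      have hynpos : (0:ℝ) < (y/(n:ℝ))^n := pow_pos (div_pos hypos hnpos) n
      have hexpinv : Real.exp (-y) ≤ ((y/n)^n)⁻¹ := by
        rw [Real.exp_neg]
        exact inv_anti₀ hynpos hyle
      have hApos : (0:ℝ) < (c₁/(n:ℝ))^n := pow_pos (div_pos hc₁ hnpos) n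
      have hyn : (c₁/(n:ℝ))^n * (k:ℝ)^2 ≤ (y/(n:ℝ))^n := by
        have h1 : (y/(n:ℝ))^n = (c₁/(n:ℝ))^n * ((k:ℝ) ^ (1-μ))^n := by
          rw [hyeq, ← mul_pow]
          congr 1
          ring
        have h2 : ((k:ℝ)^(1-μ))^n = (k:ℝ) ^ ((1-μ) * n) := by
          rw [← Real.rpow_natCast ((k:ℝ)^(1-μ)) n, ← Real.rpow_mul hkpos.le]
        have h3 : (k:ℝ)^2 ≤ (k:ℝ) ^ ((1-μ) * (n:ℝ)) := by
          rw [show ((k:ℝ)^2 : ℝ) = (k:ℝ) ^ ((2:ℕ):ℝ) by rw [Real.rpow_natCast]]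
          exact Real.rpow_le_rpow_of_exponent_le hk1 (by push_cast; linarith)
        rw [h1, h2]
        exact mul_le_mul_of_nonneg_left h3 hApos.le
      have h6 : (c₁/(n:ℝ))^n * (((n:ℝ)/c₁)^n) = 1 := by
        rw [← mul_pow, show c₁/(n:ℝ) * ((n:ℝ)/c₁) = 1 by
          field_simp]
        exact one_pow n
      have hfin : ((y/(n:ℝ))^n)⁻¹ ≤ C / ((k:ℝ)+1)^2 := by
        rw [inv_eq_one_div, div_le_div_iff₀ hynpos (by positivity)]
        have h5 : ((k:ℝ)+1)^2 ≤ 4 * (k:ℝ)^2 := by nlinarith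
        have key2 : 4 * (k:ℝ)^2 ≤ C * (y/(n:ℝ))^n := by
          have s1 : 4 * (k:ℝ)^2
              = (((n:ℝ)/c₁)^n * 4) * ((c₁/(n:ℝ))^n * (k:ℝ)^2) := by
            rw [show (((n:ℝ)/c₁)^n * 4) * ((c₁/(n:ℝ))^n * (k:ℝ)^2)
                = ((c₁/(n:ℝ))^n * (((n:ℝ)/c₁)^n)) * (4 * (k:ℝ)^2) from by ring,
              h6, one_mul]
          have s2 : (((n:ℝ)/c₁)^n * 4) * ((c₁/(n:ℝ))^n * (k:ℝ)^2)
              ≤ C * ((c₁/(n:ℝ))^n * (k:ℝ)^2) :=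
            mul_le_mul_of_nonneg_right hC4 (by positivity)
          have s3 : C * ((c₁/(n:ℝ))^n * (k:ℝ)^2) ≤ C * (y/(n:ℝ))^n :=
            mul_le_mul_of_nonneg_left hyn (by linarith)
          linarith
        linarith
      calc (∏ i ∈ Finset.range (k + 1), b i / (lam + b i + d i))
          ≤ Real.exp (-(c₁ * (k:ℝ) ^ (-μ))) ^ k := hkey k
        _ = Real.exp (-y) := hexp
        _ ≤ ((y/(n:ℝ))^n)⁻¹ := hexpinv
        _ ≤ C / ((k:ℝ)+1)^2 := hfin
  -- summability of the majorant
  have hsum : Summable (fun k : ℕ => C / ((k:ℝ) + 1)^2) := by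
    have h1 : Summable (fun k : ℕ => C / (k:ℝ)^2) := by
      have := (summable_one_div_nat_pow (p := 2)).mpr one_lt_two
      simpa [div_eq_mul_inv, one_div, mul_comm] using this.mul_left C
    have h2 : Summable (fun k : ℕ => C / ((k+1:ℕ):ℝ)^2) :=
      (_root_.summable_nat_add_iff 1).mpr h1
    refine h2.congr fun k => ?_
    push_cast
    ring_nf
  exact Summable.of_nonneg_of_le
    (fun k => Finset.prod_nonneg fun i _ => (hfacpos i).le) hbound hsum
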